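/- Let y be a Lyndon word with |y| > 1 and write its left standard factorisation y = uv, where u is the longest proper Lyndon prefix of y. Then v is also a Lyndon word. -/

import Mathlib

variable {α : Type*} [LinearOrder α] [Inhabited α]

/-- A Lyndon word: a non-empty word strictly lexicographically smaller than
all its proper non-empty suffixes. -/
def IsLyndon (w : List α) : Prop :=
  w ≠ [] ∧ ∀ v : List α, v ≠ [] → v ≠ w → v <:+ w → List.Lex (· < ·) w v

/-- `wpow x k` is the word `x` repeated `k` times. -/
def wpow (x : List α) (k : ℕ) : List α := (List.replicate k x).flatten

/-- `infWord x` is the infinite word `x^∞` (junk value if `x = []`). -/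
def infWord (x : List α) : ℕ → α := fun i => x.getD (i % x.length) default

/-- Strict lexicographic order on infinite words. -/
def InfLt (f g : ℕ → α) : Prop := ∃ n, (∀ i < n, f i = g i) ∧ f n < g n

/-- The infinite ordering `≺` on non-empty words. -/
def Prec (u v : List α) : Prop :=
  InfLt (infWord u) (infWord v) ∨ (infWord u = infWord v ∧ v.length < u.length)

/-- `u` is strongly less than `v`: they share a common prefix followed by
strictly comparable letters. -/
def StrongLt (u v : List α) : Prop :=
  ∃ (p s t : List α) (a b : α), a < b ∧ u = p ++ a :: s ∧ v = p ++ b :: t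

section Aux

variable {β : Type*} [LinearOrder β]

lemma lex_append_left_iff (p a b : List β) :
    List.Lex (· < ·) (p ++ a) (p ++ b) ↔ List.Lex (· < ·) a b := by
  induction p with
  | nil => rfl
  | cons x p ih => simpa [List.lex_cons_iff] using ih

lemma strongLt_lex {u v : List β} (h : StrongLt u v) : List.Lex (· < ·) u v := by
  obtain ⟨p, s, t, a, b, hab, rfl, rfl⟩ := h
  exact (lex_append_left_iff p _ _).mpr (List.Lex.rel hab)

lemma lex_of_prefix_ne {u v : List β} (h : u <+: v) (hne : u ≠ v) :
    List.Lex (· < ·) u v := by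
  obtain ⟨t, rfl⟩ := h
  have ht : t ≠ [] := by rintro rfl; simp at hne
  obtain ⟨c, t', rfl⟩ := List.exists_cons_of_ne_nil ht
  have : List.Lex (· < ·) ([] : List β) (c :: t') := List.Lex.nil
  simpa using (lex_append_left_iff u [] (c :: t')).mpr this

lemma lex_cases {u v : List β} (h : List.Lex (· < ·) u v) :
    (u <+: v ∧ u ≠ v) ∨ StrongLt u v := by
  induction h with
  | nil => exact Or.inl ⟨List.nil_prefix, by simp⟩
  | @rel a l₁ b l₂ hab => exact Or.inr ⟨[], l₁, l₂, a, b, hab, rfl, rfl⟩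
  | @cons a l₁ l₂ h ih =>
    rcases ih with ⟨⟨t, rfl⟩, hne⟩ | ⟨p, s, t, x, z, hxz, h1, h2⟩
    · exact Or.inl ⟨⟨t, rfl⟩, by simpa using hne⟩
    · exact Or.inr ⟨a :: p, s, t, x, z, hxz, by rw [h1]; rfl, by rw [h2]; rfl⟩

lemma lex_trans {a b c : List β} (h1 : List.Lex (· < ·) a b)
    (h2 : List.Lex (· < ·) b c) : List.Lex (· < ·) a c :=
  List.lex_trans (fun h1 h2 => lt_trans h1 h2) h1 h2

lemma lex_trichotomy (a b : List β) :
    List.Lex (· < ·) a b ∨ a = b ∨ List.Lex (· < ·) b a :=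
  trichotomous a b

lemma lex_asymm {a b : List β} (h1 : List.Lex (· < ·) a b)
    (h2 : List.Lex (· < ·) b a) : False :=
  asymm h1 h2

lemma suffix_split {s u w : List β} (h : s <:+ u ++ w) :
    s <:+ w ∨ ∃ s', s = s' ++ w ∧ s' <:+ u := by
  obtain ⟨t, ht⟩ := h
  rcases le_or_gt s.length w.length with hle | hlt
  · exact Or.inl (List.suffix_of_suffix_length_le ⟨t, ht⟩ (List.suffix_append u w) hle)
  · have hws : w <:+ s := List.suffix_of_suffix_length_le (List.suffix_append u w) ⟨t, ht⟩ hlt.le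
    obtain ⟨s', rfl⟩ := hws
    refine Or.inr ⟨s', rfl, t, ?_⟩
    have h2 : (t ++ s') ++ w = u ++ w := by simpa [List.append_assoc] using ht
    exact (List.append_left_inj w).mp h2

lemma isLyndon_singleton (a : β) : IsLyndon [a] := by
  refine ⟨by simp, ?_⟩
  intro s hs hne hsuf
  exfalso
  have h1 : 1 ≤ s.length := List.length_pos_iff.mpr hs
  have h2 : s.length ≤ 1 := by simpa using hsuf.length_le
  exact hne (hsuf.eq_of_length (by simpa using le_antisymm h2 h1))

lemma isLyndon_append {u w : List β} (hu : IsLyndon u) (hw : IsLyndon w)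
    (huw : List.Lex (· < ·) u w) : IsLyndon (u ++ w) := by
  have hune := hu.1
  have key : List.Lex (· < ·) (u ++ w) w := by
    rcases lex_cases huw with ⟨⟨t, rfl⟩, hne⟩ | hst
    · have ht : t ≠ [] := by rintro rfl; simp at hne
      have htne : t ≠ u ++ t := by
        intro h
        have := congrArg List.length h
        simp at this
        exact hune this
      have htw : List.Lex (· < ·) (u ++ t) t := hw.2 t ht htne ⟨u, rfl⟩
      exact (lex_append_left_iff u (u ++ t) t).mpr htw
    · obtain ⟨p, s, t, a, b, hab, h1, h2⟩ := hst
      exact strongLt_lex ⟨p, s ++ w, t, a, b, hab, by rw [h1]; simp, h2⟩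
  refine ⟨by simp [hune], ?_⟩
  intro s hs hne hsuf
  rcases suffix_split hsuf with hsw | ⟨s', rfl, hs'⟩
  · rcases eq_or_ne s w with rfl | hsnw
    · exact key
    · exact lex_trans key (hw.2 s hs hsnw hsw)
  · rcases eq_or_ne s' [] with rfl | hs'ne
    · simpa using key
    · have hs'u : s' ≠ u := by rintro rfl; exact hne rfl
      have hlt : List.Lex (· < ·) u s' := hu.2 s' hs'ne hs'u hs'
      rcases lex_cases hlt with ⟨hp, hpne⟩ | ⟨p, s₁, t, a, b, hab, h1, h2⟩
      · exact absurd (hp.eq_of_length (le_antisymm hp.length_le hs'.length_le)) hpne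
      · exact strongLt_lex
          ⟨p, s₁ ++ w, t ++ w, a, b, hab, by rw [h1]; simp, by rw [h2]; simp⟩

lemma exists_longest_lyndon_prefix (v : List β) (hv : v ≠ []) :
    ∃ l : List β, IsLyndon l ∧ l <+: v ∧
      ∀ l', IsLyndon l' → l' <+: v → l'.length ≤ l.length := by
  classical
  set P : ℕ → Prop := fun n => IsLyndon (v.take n) with hP
  have hvlen : 1 ≤ v.length := List.length_pos_iff.mpr hv
  have h1 : P 1 := by
    obtain ⟨a, v', rfl⟩ := List.exists_cons_of_ne_nil hv
    simpa [hP] using isLyndon_singleton a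
  set N := Nat.findGreatest P v.length with hN
  have hNP : P N := Nat.findGreatest_spec hvlen h1
  have hNle : N ≤ v.length := Nat.findGreatest_le v.length
  refine ⟨v.take N, hNP, List.take_prefix N v, ?_⟩
  intro l' hl' hl'pre
  have hl'len : l'.length ≤ v.length := hl'pre.length_le
  have : P l'.length := by
    rw [hP]
    simpa [← List.prefix_iff_eq_take.mp hl'pre] using hl'
  have := Nat.le_findGreatest hl'len this
  simpa [hN, min_eq_left hNle, hl'len] using this.trans_eq rfl

lemma exists_small_suffix :
    ∀ (n : ℕ) (v : List β), v.length ≤ n → v ≠ [] →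
      ∀ l, IsLyndon l → l <+: v →
        (∀ l', IsLyndon l' → l' <+: v → l'.length ≤ l.length) →
        ∃ lk, lk ≠ [] ∧ lk <:+ v ∧ (List.Lex (· < ·) lk l ∨ lk = l) := by
  intro n
  induction n with
  | zero =>
    intro v hvlen hvne
    exact absurd (List.length_eq_zero_iff.mp (Nat.le_zero.mp hvlen)) hvne
  | succ n ih =>
    intro v hvlen hvne l hl hlpre hlmax
    rcases eq_or_ne l v with rfl | hlv
    · exact ⟨l, hl.1, List.suffix_refl l, Or.inr rfl⟩
    · obtain ⟨t, rfl⟩ := hlpre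
      have ht : t ≠ [] := by rintro rfl; simp at hlv
      obtain ⟨l₁, hl₁, hl₁pre, hl₁max⟩ := exists_longest_lyndon_prefix t ht
      have hllen : 1 ≤ l.length := List.length_pos_iff.mpr hl.1
      have htlen : t.length ≤ n := by
        have := hvlen
        simp only [List.length_append] at this
        omega
      obtain ⟨lk, hlkne, hlksuf, hlkle⟩ := ih t htlen ht l₁ hl₁ hl₁pre hl₁max
      have hl₁l : List.Lex (· < ·) l₁ l ∨ l₁ = l := by
        rcases lex_trichotomy l l₁ with h | h | h
        · exfalso
          have hly : IsLyndon (l ++ l₁) := isLyndon_append hl hl₁ h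
          have hpre : l ++ l₁ <+: l ++ t := by
            obtain ⟨r, rfl⟩ := hl₁pre
            exact ⟨r, by rw [List.append_assoc]⟩
          have hle := hlmax _ hly hpre
          simp only [List.length_append] at hle
          have : l₁.length = 0 := by omega
          exact hl₁.1 (List.length_eq_zero_iff.mp this)
        · exact Or.inr h.symm
        · exact Or.inl h
      refine ⟨lk, hlkne, hlksuf.trans (List.suffix_append l t), ?_⟩
      rcases hlkle with h1 | rfl
      · rcases hl₁l with h2 | rfl
        · exact Or.inl (lex_trans h1 h2)
        · exact Or.inl h1
      · exact hl₁l

end Aux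

/-- Left standard factorisation: if `y = u ++ v` is a Lyndon word with
`|y| > 1` and `u` is its longest proper Lyndon prefix, then `v` is a
Lyndon word as well. -/
theorem right_factor_of_left_standard_factorisation {α : Type*} [LinearOrder α] [Inhabited α]
    (y u v : List α) (hy : IsLyndon y) (hlen : 1 < y.length)
    (hfac : y = u ++ v) (hu : IsLyndon u) (huy : u ≠ y)
    (hmax : ∀ u' : List α, IsLyndon u' → u' <+: y → u' ≠ y → u'.length ≤ u.length) :
    IsLyndon v := by
  subst hfac
  have hune : u ≠ [] := hu.1
  have hvne : v ≠ [] := by rintro rfl; simp at huy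
  have hulen : 1 ≤ u.length := List.length_pos_iff.mpr hune
  have hvlen : 1 ≤ v.length := List.length_pos_iff.mpr hvne
  obtain ⟨l, hl, hlpre, hlmax⟩ := exists_longest_lyndon_prefix v hvne
  by_cases hul : List.Lex (· < ·) u l
  · -- then l must be all of v, and v is Lyndon
    rcases eq_or_ne l v with rfl | hlv
    · exact hl
    · exfalso
      have hllt : l.length < v.length := by
        rcases lt_or_eq_of_le hlpre.length_le with h | h
        · exact h
        · exact absurd (hlpre.eq_of_length h) hlv
      have hly : IsLyndon (u ++ l) := isLyndon_append hu hl hul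
      have hpre : u ++ l <+: u ++ v := by
        obtain ⟨r, rfl⟩ := hlpre
        exact ⟨r, by rw [List.append_assoc]⟩
      have hne : u ++ l ≠ u ++ v := by
        intro h
        have := congrArg List.length h
        simp only [List.length_append] at this
        omega
      have := hmax _ hly hpre hne
      simp only [List.length_append] at this
      have : l.length = 0 := by omega
      exact hl.1 (List.length_eq_zero_iff.mp this)
  · exfalso
    have hlu : List.Lex (· < ·) l u ∨ l = u := by
      rcases lex_trichotomy l u with h | h | h
      · exact Or.inl h
      · exact Or.inr h
      · exact absurd h hul
    obtain ⟨lk, hlkne, hlksuf, hlkle⟩ :=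
      exists_small_suffix v.length v le_rfl hvne l hl hlpre hlmax
    have hlku : List.Lex (· < ·) lk u ∨ lk = u := by
      rcases hlkle with h1 | rfl
      · rcases hlu with h2 | rfl
        · exact Or.inl (lex_trans h1 h2)
        · exact Or.inl h1
      · exact hlu
    have huney : u ≠ u ++ v := by
      intro h
      have := congrArg List.length h
      simp only [List.length_append] at this
      omega
    have huYlex : List.Lex (· < ·) u (u ++ v) :=
      lex_of_prefix_ne ⟨v, rfl⟩ huney
    have hlkY : List.Lex (· < ·) lk (u ++ v) := by
      rcases hlku with h | rfl
      · exact lex_trans h huYlex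
      · exact huYlex
    have hlkney : lk ≠ u ++ v := by
      intro h
      have h1 := hlksuf.length_le
      have := congrArg List.length h
      simp only [List.length_append] at this
      omega
    have hYlk : List.Lex (· < ·) (u ++ v) lk :=
      hy.2 lk hlkne hlkney (hlksuf.trans (List.suffix_append u v))
    exact lex_asymm hlkY hYlk
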